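/- There is a universal constant C₀ > 0 such that the following holds. Let δ > 0, ε ≥ 0, and let A, B, C, D, E, F, G be points on the unit sphere in ℝ³ with ‖B − E‖ ≤ ε, such that each of the twelve pairwise distances among {A, B, C, D} and among {A, E, F, G} lies in the interval [4√6/6 − δ, 4√6/6 + δ]. Then either (‖C − F‖ ≤ C₀·(δ + ε) and ‖D − G‖ ≤ C₀·(δ + ε)) or (‖C − G‖ ≤ C₀·(δ + ε) and ‖D − F‖ ≤ C₀·(δ + ε)); that is, the points {C, D} are each within distance C₀·(δ + ε) of different points of {F, G}. -/

import Mathlib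

open RealInnerProductSpace

private lemma Hq (p q : ℝ) (h1 : -0.344 ≤ p) (h2 : p ≤ -0.323)
    (hq2 : q^2 = 1 - p^2) (hq0 : 0 ≤ q) : 0.93 ≤ q ∧ q ≤ 0.95 := by
  constructor <;> nlinarith

private lemma Hpx (p x η : ℝ) (hη0 : 0 ≤ η)
    (hp1 : -0.344 ≤ p) (hp2 : p ≤ -0.323) (hp3 : -η ≤ p + 1/3) (hp4 : p + 1/3 ≤ η)
    (hx1 : -η ≤ x + 1/3) (hx2 : x + 1/3 ≤ η) :
    1/9 - 0.68*η ≤ p*x ∧ p*x ≤ 1/9 + 0.68*η := by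
  constructor
  · nlinarith [mul_nonneg (by linarith : (0:ℝ) ≤ -p - 0.323) (by linarith : (0:ℝ) ≤ x + 1/3 + η)]
  · nlinarith [mul_nonneg (by linarith : (0:ℝ) ≤ -p - 0.323) (by linarith : (0:ℝ) ≤ η - (x + 1/3))]

private lemma Hx2 (q v η : ℝ) (hη : η ≤ 0.01) (hη0 : 0 ≤ η)
    (hql : 0.93 ≤ q) (hqu : q ≤ 0.95)
    (h1 : -(4/9) - 1.68*η ≤ q*v) (h2 : q*v ≤ -(4/9) + 1.68*η) :
    -0.497 ≤ v ∧ v ≤ -0.45 := by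
  constructor
  · by_contra h
    push_neg at h
    nlinarith [mul_nonneg (by linarith : (0:ℝ) ≤ q - 0.93) (by linarith : (0:ℝ) ≤ -v - 0.497)]
  · by_contra h
    push_neg at h
    nlinarith [mul_nonneg (by linarith : (0:ℝ) ≤ q - 0.93) (by linarith : (0:ℝ) ≤ v + 0.45)]

private lemma Hcoord (p q η x1 x2 : ℝ) (hη0 : 0 ≤ η) (hη : η ≤ 0.01)
    (hp : |p + 1/3| ≤ η) (hpl : -0.344 ≤ p) (hpu : p ≤ -0.323)
    (hql : 0.93 ≤ q) (hqu : q ≤ 0.95)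
    (hx1 : |x1 + 1/3| ≤ η) (hbx : |p*x1 + q*x2 + 1/3| ≤ η) :
    -0.497 ≤ x2 ∧ x2 ≤ -0.45 := by
  obtain ⟨h1, h2⟩ := Hpx p x1 η hη0 hpl hpu (abs_le.mp hp).1 (abs_le.mp hp).2
    (abs_le.mp hx1).1 (abs_le.mp hx1).2
  exact Hx2 q x2 η hη hη0 hql hqu
    (by have := (abs_le.mp hbx).1; linarith) (by have := (abs_le.mp hbx).2; linarith)

private lemma Hx3 (x1 x2 x3 : ℝ) (h1 : -0.344 ≤ x1) (h2 : x1 ≤ -0.323)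
    (h3 : -0.497 ≤ x2) (h4 : x2 ≤ -0.45) (hxs : x1^2 + x2^2 + x3^2 = 1) :
    0.63 ≤ x3^2 ∧ x3^2 ≤ 0.70 := by
  constructor
  · nlinarith [mul_nonneg (by linarith : (0:ℝ) ≤ x1 + 0.344) (by linarith : (0:ℝ) ≤ -x1 - 0.323),
      mul_nonneg (by linarith : (0:ℝ) ≤ x2 + 0.497) (by linarith : (0:ℝ) ≤ -x2 - 0.45)]
  · nlinarith [mul_nonneg (by linarith : (0:ℝ) ≤ x1 + 0.344) (by linarith : (0:ℝ) ≤ -x1 - 0.323),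
      mul_nonneg (by linarith : (0:ℝ) ≤ x2 + 0.497) (by linarith : (0:ℝ) ≤ -x2 - 0.45)]

private lemma Hdiff2 (q x2 y2 η : ℝ) (hη0 : 0 ≤ η)
    (hql : 0.93 ≤ q) (hqu : q ≤ 0.95)
    (h1 : -(4/9) - 1.68*η ≤ q*x2) (h2 : q*x2 ≤ -(4/9) + 1.68*η)
    (h3 : -(4/9) - 1.68*η ≤ q*y2) (h4 : q*y2 ≤ -(4/9) + 1.68*η)
    (hx : x2 ≤ -0.45) (hy : y2 ≤ -0.45) :
    -(3.62*η) ≤ x2 - y2 ∧ x2 - y2 ≤ 3.62*η := by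
  constructor
  · by_contra h
    push_neg at h
    nlinarith [mul_nonneg (by linarith : (0:ℝ) ≤ q - 0.93) (by linarith : (0:ℝ) ≤ -(x2 - y2) - 3.62*η)]
  · by_contra h
    push_neg at h
    nlinarith [mul_nonneg (by linarith : (0:ℝ) ≤ q - 0.93) (by linarith : (0:ℝ) ≤ (x2 - y2) - 3.62*η)]

private lemma Hsq (x1 x2 x3 y1 y2 y3 η : ℝ) (hη0 : 0 ≤ η)
    (hx1 : -0.344 ≤ x1) (hx1u : x1 ≤ -0.323) (hy1 : -0.344 ≤ y1) (hy1u : y1 ≤ -0.323)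
    (hx2 : -0.497 ≤ x2) (hx2u : x2 ≤ -0.45) (hy2 : -0.497 ≤ y2) (hy2u : y2 ≤ -0.45)
    (he1a : -(2*η) ≤ x1 - y1) (he1b : x1 - y1 ≤ 2*η)
    (he2a : -(3.62*η) ≤ x2 - y2) (he2b : x2 - y2 ≤ 3.62*η)
    (hxs : x1^2 + x2^2 + x3^2 = 1) (hys : y1^2 + y2^2 + y3^2 = 1) :
    -(5*η) ≤ x3^2 - y3^2 ∧ x3^2 - y3^2 ≤ 5*η := by
  have k1a := mul_nonneg (by linarith : (0:ℝ) ≤ 2*η - (x1-y1)) (by linarith : (0:ℝ) ≤ -(x1+y1))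
  have k1b := mul_nonneg (by linarith : (0:ℝ) ≤ 2*η + (x1-y1)) (by linarith : (0:ℝ) ≤ -(x1+y1))
  have k2a := mul_nonneg (by linarith : (0:ℝ) ≤ 3.62*η - (x2-y2)) (by linarith : (0:ℝ) ≤ -(x2+y2))
  have k2b := mul_nonneg (by linarith : (0:ℝ) ≤ 3.62*η + (x2-y2)) (by linarith : (0:ℝ) ≤ -(x2+y2))
  constructor <;> nlinarith [k1a, k1b, k2a, k2b]

private lemma H32 (x3 y3 η : ℝ) (hη0 : 0 ≤ η)
    (hx3a : 0.63 ≤ x3^2) (hx3b : x3^2 ≤ 0.70) (hy3a : 0.63 ≤ y3^2) (hy3b : y3^2 ≤ 0.70)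
    (hsign : 0 ≤ x3*y3) (hsa : -(5*η) ≤ x3^2 - y3^2) (hsb : x3^2 - y3^2 ≤ 5*η) :
    (x3 - y3)^2 ≤ 10*η^2 := by
  have hprod : 0.63 ≤ x3*y3 := by nlinarith
  have hsum2 : 2.52 ≤ (x3 + y3)^2 := by nlinarith
  nlinarith [sq_nonneg (x3 - y3), sq_nonneg (x3 + y3),
    mul_nonneg (mul_nonneg hη0 hη0) (sq_nonneg (x3 - y3))]

private lemma Hfin (e1 e2 x3 y3 η : ℝ) (hη0 : 0 ≤ η)
    (h1a : -(2*η) ≤ e1) (h1b : e1 ≤ 2*η) (h2a : -(3.62*η) ≤ e2) (h2b : e2 ≤ 3.62*η)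
    (h3 : (x3 - y3)^2 ≤ 10*η^2) : e1^2 + e2^2 + (x3 - y3)^2 ≤ (6*η)^2 := by
  nlinarith [mul_nonneg (by linarith : (0:ℝ) ≤ 2*η - e1) (by linarith : (0:ℝ) ≤ 2*η + e1),
    mul_nonneg (by linarith : (0:ℝ) ≤ 3.62*η - e2) (by linarith : (0:ℝ) ≤ 3.62*η + e2),
    mul_nonneg hη0 hη0]

private lemma pair_close (p q η x1 x2 x3 y1 y2 y3 : ℝ)
    (hη0 : 0 ≤ η) (hη : η ≤ 0.01)
    (hp : |p + 1/3| ≤ η) (hq2 : q^2 = 1 - p^2) (hq0 : 0 ≤ q)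
    (hx1 : |x1 + 1/3| ≤ η) (hy1 : |y1 + 1/3| ≤ η)
    (hbx : |p*x1 + q*x2 + 1/3| ≤ η) (hby : |p*y1 + q*y2 + 1/3| ≤ η)
    (hxs : x1^2 + x2^2 + x3^2 = 1) (hys : y1^2 + y2^2 + y3^2 = 1)
    (hsign : 0 ≤ x3 * y3) :
    (x1 - y1)^2 + (x2 - y2)^2 + (x3 - y3)^2 ≤ (6*η)^2 := by
  rw [abs_le] at hp hx1 hy1 hbx hby
  have hpl : -0.344 ≤ p := by linarith [hp.1]
  have hpu : p ≤ -0.323 := by linarith [hp.2]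
  have hx1l : -0.344 ≤ x1 := by linarith [hx1.1]
  have hx1u : x1 ≤ -0.323 := by linarith [hx1.2]
  have hy1l : -0.344 ≤ y1 := by linarith [hy1.1]
  have hy1u : y1 ≤ -0.323 := by linarith [hy1.2]
  obtain ⟨hql, hqu⟩ := Hq p q hpl hpu hq2 hq0
  obtain ⟨hpxa, hpxb⟩ := Hpx p x1 η hη0 hpl hpu hp.1 hp.2 hx1.1 hx1.2
  obtain ⟨hpya, hpyb⟩ := Hpx p y1 η hη0 hpl hpu hp.1 hp.2 hy1.1 hy1.2
  have hqx2a : -(4/9) - 1.68*η ≤ q*x2 := by linarith [hbx.1]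
  have hqx2b : q*x2 ≤ -(4/9) + 1.68*η := by linarith [hbx.2]
  have hqy2a : -(4/9) - 1.68*η ≤ q*y2 := by linarith [hby.1]
  have hqy2b : q*y2 ≤ -(4/9) + 1.68*η := by linarith [hby.2]
  obtain ⟨hx2l, hx2u⟩ := Hx2 q x2 η hη hη0 hql hqu hqx2a hqx2b
  obtain ⟨hy2l, hy2u⟩ := Hx2 q y2 η hη hη0 hql hqu hqy2a hqy2b
  obtain ⟨hx3a, hx3b⟩ := Hx3 x1 x2 x3 hx1l hx1u hx2l hx2u hxs
  obtain ⟨hy3a, hy3b⟩ := Hx3 y1 y2 y3 hy1l hy1u hy2l hy2u hys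
  have he1a : -(2*η) ≤ x1 - y1 := by linarith [hx1.1, hy1.2]
  have he1b : x1 - y1 ≤ 2*η := by linarith [hx1.2, hy1.1]
  obtain ⟨he2a, he2b⟩ := Hdiff2 q x2 y2 η hη0 hql hqu hqx2a hqx2b hqy2a hqy2b hx2u hy2u
  obtain ⟨hsa, hsb⟩ := Hsq x1 x2 x3 y1 y2 y3 η hη0 hx1l hx1u hy1l hy1u hx2l hx2u hy2l hy2u
    he1a he1b he2a he2b hxs hys
  have h32 := H32 x3 y3 η hη0 hx3a hx3b hy3a hy3b hsign hsa hsb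
  exact Hfin (x1 - y1) (x2 - y2) x3 y3 η hη0 he1a he1b he2a he2b h32

private lemma Hneg (x1 x2 y1 y2 s η : ℝ) (hη : η ≤ 0.01)
    (hx1 : -0.344 ≤ x1) (hx1u : x1 ≤ -0.323) (hy1 : -0.344 ≤ y1) (hy1u : y1 ≤ -0.323)
    (hx2 : -0.497 ≤ x2) (hx2u : x2 ≤ -0.45) (hy2 : -0.497 ≤ y2) (hy2u : y2 ≤ -0.45)
    (hcross : |x1*y1 + x2*y2 + s + 1/3| ≤ η) : s ≤ -0.6 := by
  nlinarith [mul_nonneg (by linarith : (0:ℝ) ≤ x1 + 0.344) (by linarith : (0:ℝ) ≤ y1 + 0.344),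
    mul_nonneg (by linarith : (0:ℝ) ≤ x2 + 0.497) (by linarith : (0:ℝ) ≤ y2 + 0.497),
    (abs_le.mp hcross).2]

private lemma Hnorm (r b : ℝ) (h0 : 0 ≤ r) (hb : 0 ≤ b) (h : r^2 ≤ b^2) : r ≤ b := by
  nlinarith

private lemma aux_parallel (A e w v : EuclideanSpace ℝ (Fin 3))
    (hA : ⟪A, A⟫ = 1) (he : ⟪e, e⟫ = 1) (hAe : ⟪A, e⟫ = 0)
    (hw1 : ⟪A, w⟫ = 0) (hw2 : ⟪e, w⟫ = 0) (hw : w ≠ 0)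
    (hv1 : ⟪A, v⟫ = 0) (hv2 : ⟪e, v⟫ = 0) : ∃ c : ℝ, v = c • w := by
  have hAe' : ⟪e, A⟫ = 0 := by rw [real_inner_comm]; exact hAe
  have hdep : ¬ LinearIndependent ℝ ![A, e, w, v] := by
    intro h
    have h4 := h.fintype_card_le_finrank
    rw [finrank_euclideanSpace_fin] at h4
    simp at h4
  rw [Fintype.not_linearIndependent_iff] at hdep
  obtain ⟨g, hsum, i, hi⟩ := hdep
  rw [Fin.sum_univ_four] at hsum
  simp only [Matrix.cons_val_zero, Matrix.cons_val_one, Matrix.head_cons,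
    Matrix.cons_val_two, Matrix.tail_cons, Matrix.cons_val_three] at hsum
  have h0 : g 0 = 0 := by
    have := congrArg (fun z => ⟪A, z⟫) hsum
    have hA0 : A ≠ 0 := by rintro rfl; simp at hA
    simpa [inner_add_right, inner_smul_right, hA, hAe, hw1, hv1, hA0] using this
  have h1 : g 1 = 0 := by
    have := congrArg (fun z => ⟪e, z⟫) hsum
    have he0 : e ≠ 0 := by rintro rfl; simp at he
    simpa [inner_add_right, inner_smul_right, he, hAe', hw2, hv2, he0] using this
  rw [h0, h1] at hsum
  simp only [zero_smul, zero_add] at hsum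
  by_cases h3 : g 3 = 0
  · exfalso
    rw [h3] at hsum
    simp only [zero_smul, add_zero] at hsum
    have h2 : g 2 = 0 := by
      by_contra h2
      exact hw (by simpa [smul_eq_zero, h2] using hsum)
    fin_cases i <;> simp_all
  · refine ⟨-(g 2) / g 3, ?_⟩
    have hv : g 3 • v = (-(g 2)) • w := by
      rw [neg_smul]
      linear_combination (norm := abel) hsum
    calc v = (g 3)⁻¹ • (g 3 • v) := by rw [smul_smul, inv_mul_cancel₀ h3, one_smul]
    _ = (-(g 2) / g 3) • w := by rw [hv, smul_smul]; ring_nf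

private lemma expand3 {A e2 n : EuclideanSpace ℝ (Fin 3)}
    (hAA : ⟪A,A⟫ = 1) (hee : ⟪e2,e2⟫ = 1) (hnn : ⟪n,n⟫ = 1)
    (hAe : ⟪A,e2⟫ = 0) (hAn : ⟪A,n⟫ = 0) (hen : ⟪e2,n⟫ = 0)
    (x1 x2 x3 y1 y2 y3 : ℝ) (X Y : EuclideanSpace ℝ (Fin 3))
    (hX : X = x1 • A + x2 • e2 + x3 • n) (hY : Y = y1 • A + y2 • e2 + y3 • n) :
    ⟪X, Y⟫ = x1*y1 + x2*y2 + x3*y3 := by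
  have heA : ⟪e2,A⟫ = 0 := by rw [real_inner_comm]; exact hAe
  have hnA : ⟪n,A⟫ = 0 := by rw [real_inner_comm]; exact hAn
  have hne : ⟪n,e2⟫ = 0 := by rw [real_inner_comm]; exact hen
  subst hX hY
  simp only [inner_add_left, inner_add_right, real_inner_smul_left, real_inner_smul_right,
    hAA, hee, hnn, hAe, hAn, hen, heA, hnA, hne]
  ring

private lemma Hkey (r t δ s : ℝ) (hδ : 0 < δ) (hδ5 : δ ≤ 0.005)
    (hs : s^2 = 6) (hs0 : 0 ≤ s)
    (hr0 : 0 ≤ r) (hl : 4*s/6 - δ ≤ r) (hu : r ≤ 4*s/6 + δ)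
    (ht : r^2 = 2 - 2*t) : |t + 1/3| ≤ 2*δ := by
  have hs6a : 2.449 ≤ s := by nlinarith
  have hs6b : s ≤ 2.45 := by nlinarith
  have hL0 : (0:ℝ) ≤ 4*s/6 - δ := by nlinarith
  have h2 : r^2 ≤ (4*s/6 + δ)^2 := by nlinarith
  have h3 : (4*s/6 - δ)^2 ≤ r^2 := by nlinarith
  rw [abs_le]
  constructor <;> nlinarith

private lemma Hp2pos (x : ℝ) (h1 : -0.344 ≤ x) (h2 : x ≤ -0.323) : 0 < 1 - x^2 := by
  nlinarith

private lemma Hwpos' (c1 c2 : ℝ) (h1 : -0.344 ≤ c1) (h2 : c1 ≤ -0.323)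
    (h3 : -0.497 ≤ c2) (h4 : c2 ≤ -0.45) : 0 < 1 - c1^2 - c2^2 := by
  nlinarith

private lemma Hsign1 (a b : ℝ) (h : a*b ≤ -0.6) (ha : 0 < a) : b < 0 := by
  nlinarith

private lemma Hsign2 (a b : ℝ) (h : a*b ≤ -0.6) (ha : b < 0) : 0 < a := by
  nlinarith

private lemma Hmulnn (a b : ℝ) (ha : a ≤ 0) (hb : b ≤ 0) : 0 ≤ a*b := by
  nlinarith
set_option maxHeartbeats 2000000 in
/-- Lemma: two tetrahedra inscribed in the unit sphere sharing a vertex `A`, whose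
vertices `B` and `E` are within `ε` of each other, and all of whose edge lengths are
within `δ` of `4√6/6`, have their remaining vertices pairwise within `O(δ + ε)` of
each other (matched up in one of the two possible ways). -/
theorem stmt4 :
    ∃ C₀ : ℝ, C₀ > 0 ∧
      ∀ (δ ε : ℝ), 0 < δ → 0 ≤ ε →
        ∀ A B C D E F G : EuclideanSpace ℝ (Fin 3),
          ‖A‖ = 1 → ‖B‖ = 1 → ‖C‖ = 1 → ‖D‖ = 1 → ‖E‖ = 1 → ‖F‖ = 1 → ‖G‖ = 1 →
          ‖B - E‖ ≤ ε →
          ‖A - B‖ ∈ Set.Icc (4 * Real.sqrt 6 / 6 - δ) (4 * Real.sqrt 6 / 6 + δ) →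
          ‖A - C‖ ∈ Set.Icc (4 * Real.sqrt 6 / 6 - δ) (4 * Real.sqrt 6 / 6 + δ) →
          ‖A - D‖ ∈ Set.Icc (4 * Real.sqrt 6 / 6 - δ) (4 * Real.sqrt 6 / 6 + δ) →
          ‖B - C‖ ∈ Set.Icc (4 * Real.sqrt 6 / 6 - δ) (4 * Real.sqrt 6 / 6 + δ) →
          ‖B - D‖ ∈ Set.Icc (4 * Real.sqrt 6 / 6 - δ) (4 * Real.sqrt 6 / 6 + δ) →
          ‖C - D‖ ∈ Set.Icc (4 * Real.sqrt 6 / 6 - δ) (4 * Real.sqrt 6 / 6 + δ) →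
          ‖A - E‖ ∈ Set.Icc (4 * Real.sqrt 6 / 6 - δ) (4 * Real.sqrt 6 / 6 + δ) →
          ‖A - F‖ ∈ Set.Icc (4 * Real.sqrt 6 / 6 - δ) (4 * Real.sqrt 6 / 6 + δ) →
          ‖A - G‖ ∈ Set.Icc (4 * Real.sqrt 6 / 6 - δ) (4 * Real.sqrt 6 / 6 + δ) →
          ‖E - F‖ ∈ Set.Icc (4 * Real.sqrt 6 / 6 - δ) (4 * Real.sqrt 6 / 6 + δ) →
          ‖E - G‖ ∈ Set.Icc (4 * Real.sqrt 6 / 6 - δ) (4 * Real.sqrt 6 / 6 + δ) →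
          ‖F - G‖ ∈ Set.Icc (4 * Real.sqrt 6 / 6 - δ) (4 * Real.sqrt 6 / 6 + δ) →
          ((‖C - F‖ ≤ C₀ * (δ + ε) ∧ ‖D - G‖ ≤ C₀ * (δ + ε)) ∨
           (‖C - G‖ ≤ C₀ * (δ + ε) ∧ ‖D - F‖ ≤ C₀ * (δ + ε))) := by
  refine ⟨400, by norm_num, ?_⟩
  intro δ ε hδ hε A B C D E F G hA hB hC hD hE hF hG hBE
  intro hAB hAC hAD hBC hBD hCD hAE hAF hAG hEF hEG hFG
  by_cases hbig : 0.01 < 2*δ + ε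
  · have h2 : (2:ℝ) ≤ 400 * (δ + ε) := by linarith
    have bCF : ‖C - F‖ ≤ 2 := by
      calc ‖C - F‖ ≤ ‖C‖ + ‖F‖ := norm_sub_le _ _
      _ = 2 := by rw [hC, hF]; norm_num
    have bDG : ‖D - G‖ ≤ 2 := by
      calc ‖D - G‖ ≤ ‖D‖ + ‖G‖ := norm_sub_le _ _
      _ = 2 := by rw [hD, hG]; norm_num
    exact Or.inl ⟨bCF.trans h2, bDG.trans h2⟩
  push_neg at hbig
  have hδ5 : δ ≤ 0.005 := by linarith
  set η : ℝ := 2*δ + ε with hη_def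
  have hη0 : 0 ≤ η := by positivity
  have hη : η ≤ 0.01 := hbig
  -- edge lengths translate into inner products near -1/3
  have key : ∀ X Y : EuclideanSpace ℝ (Fin 3), ‖X‖ = 1 → ‖Y‖ = 1 →
      ‖X - Y‖ ∈ Set.Icc (4 * Real.sqrt 6 / 6 - δ) (4 * Real.sqrt 6 / 6 + δ) →
      |⟪X,Y⟫ + 1/3| ≤ 2*δ := by
    intro X Y hX hY hXY
    obtain ⟨hl, hu⟩ := hXY
    have hns : ‖X - Y‖^2 = 2 - 2*⟪X,Y⟫ := by
      rw [norm_sub_sq_real, hX, hY]; ring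
    exact Hkey ‖X - Y‖ ⟪X,Y⟫ δ (Real.sqrt 6) hδ hδ5
      (Real.sq_sqrt (by norm_num)) (Real.sqrt_nonneg 6) (norm_nonneg _)
      (by linarith) (by linarith) hns
  have h2δη : 2*δ ≤ η := by rw [hη_def]; linarith
  have keyη : ∀ X Y : EuclideanSpace ℝ (Fin 3), ‖X‖ = 1 → ‖Y‖ = 1 →
      ‖X - Y‖ ∈ Set.Icc (4 * Real.sqrt 6 / 6 - δ) (4 * Real.sqrt 6 / 6 + δ) →
      |⟪X,Y⟫ + 1/3| ≤ η := fun X Y hX hY h => (key X Y hX hY h).trans h2δη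
  have hpAB := keyη A B hA hB hAB
  have hAC' := keyη A C hA hC hAC
  have hAD' := keyη A D hA hD hAD
  have hAF' := keyη A F hA hF hAF
  have hAG' := keyη A G hA hG hAG
  have hBC' := keyη B C hB hC hBC
  have hBD' := keyη B D hB hD hBD
  have hCD' := keyη C D hC hD hCD
  have hEF' := key E F hE hF hEF
  have hEG' := key E G hE hG hEG
  have hFG' := keyη F G hF hG hFG
  -- transfer the E-edge bounds to B
  have hBF' : |⟪B,F⟫ + 1/3| ≤ η := by
    have h1 : |⟪B - E, F⟫| ≤ ε := by
      calc |⟪B - E, F⟫| ≤ ‖B - E‖ * ‖F‖ := abs_real_inner_le_norm _ _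
      _ ≤ ε := by rw [hF]; simpa using hBE
    have h2 : ⟪B - E, F⟫ = ⟪B,F⟫ - ⟪E,F⟫ := inner_sub_left _ _ _
    rw [abs_le] at h1 hEF' ⊢
    rw [h2] at h1
    constructor
    · rw [hη_def]; linarith [h1.1, hEF'.1]
    · rw [hη_def]; linarith [h1.2, hEF'.2]
  have hBG' : |⟪B,G⟫ + 1/3| ≤ η := by
    have h1 : |⟪B - E, G⟫| ≤ ε := by
      calc |⟪B - E, G⟫| ≤ ‖B - E‖ * ‖G‖ := abs_real_inner_le_norm _ _
      _ ≤ ε := by rw [hG]; simpa using hBE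
    have h2 : ⟪B - E, G⟫ = ⟪B,G⟫ - ⟪E,G⟫ := inner_sub_left _ _ _
    rw [abs_le] at h1 hEG' ⊢
    rw [h2] at h1
    constructor
    · rw [hη_def]; linarith [h1.1, hEG'.1]
    · rw [hη_def]; linarith [h1.2, hEG'.2]
  -- self inner products
  have hAA : ⟪A,A⟫ = 1 := by rw [real_inner_self_eq_norm_sq, hA]; norm_num
  have hBB : ⟪B,B⟫ = 1 := by rw [real_inner_self_eq_norm_sq, hB]; norm_num
  have hCC : ⟪C,C⟫ = 1 := by rw [real_inner_self_eq_norm_sq, hC]; norm_num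
  have hDD : ⟪D,D⟫ = 1 := by rw [real_inner_self_eq_norm_sq, hD]; norm_num
  have hFF : ⟪F,F⟫ = 1 := by rw [real_inner_self_eq_norm_sq, hF]; norm_num
  have hGG : ⟪G,G⟫ = 1 := by rw [real_inner_self_eq_norm_sq, hG]; norm_num
  -- orthonormal frame construction
  set p : ℝ := ⟪A,B⟫ with hp_def
  set u : EuclideanSpace ℝ (Fin 3) := B - p • A with hu_def
  have hBA : ⟪B,A⟫ = p := real_inner_comm A B
  have huu : ⟪u,u⟫ = 1 - p^2 := by
    simp only [hu_def, inner_sub_left, inner_sub_right, real_inner_smul_left,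
      real_inner_smul_right, hAA, hBB, hBA, ← hp_def]
    ring
  have hpl : -0.344 ≤ p := by have := (abs_le.mp hpAB).1; linarith
  have hpu : p ≤ -0.323 := by have := (abs_le.mp hpAB).2; linarith
  have huupos : 0 < ⟪u,u⟫ := by rw [huu]; exact Hp2pos p hpl hpu
  have hu0 : u ≠ 0 := by
    intro h; rw [h, inner_zero_left] at huupos; linarith
  set q : ℝ := ‖u‖ with hq_def
  have hq0 : 0 < q := by rw [hq_def]; exact norm_pos_iff.mpr hu0
  have hq2 : q^2 = 1 - p^2 := by rw [hq_def, ← real_inner_self_eq_norm_sq, huu]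
  obtain ⟨hql, hqu⟩ := Hq p q hpl hpu hq2 (le_of_lt hq0)
  set e2 : EuclideanSpace ℝ (Fin 3) := q⁻¹ • u with he2_def
  have hAu : ⟪A,u⟫ = 0 := by
    simp only [hu_def, inner_sub_right, real_inner_smul_right, hAA, ← hp_def]
    ring
  have hAe : ⟪A,e2⟫ = 0 := by
    rw [he2_def, real_inner_smul_right, hAu, mul_zero]
  have heA : ⟪e2,A⟫ = 0 := by rw [real_inner_comm]; exact hAe
  have hee : ⟪e2,e2⟫ = 1 := by
    rw [he2_def, real_inner_smul_left, real_inner_smul_right, huu, ← hq2]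
    field_simp
    try ring
  have hBdec0 : B = p • A + q • e2 := by
    rw [he2_def, smul_smul, mul_inv_cancel₀ (ne_of_gt hq0), one_smul, hu_def]
    abel
  -- inner products with B in coordinates
  have hBX : ∀ X : EuclideanSpace ℝ (Fin 3), ⟪B,X⟫ = p*⟪A,X⟫ + q*⟪e2,X⟫ := by
    intro X
    conv_lhs => rw [hBdec0]
    rw [inner_add_left, real_inner_smul_left, real_inner_smul_left]
  -- the third frame vector
  set c1 : ℝ := ⟪A,C⟫ with hc1_def
  set c2 : ℝ := ⟪e2,C⟫ with hc2_def
  set w : EuclideanSpace ℝ (Fin 3) := C - c1 • A - c2 • e2 with hw_def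
  have hwA : ⟪A,w⟫ = 0 := by
    simp only [hw_def, inner_sub_right, real_inner_smul_right, hAA, hAe, ← hc1_def]
    ring
  have hwe : ⟪e2,w⟫ = 0 := by
    simp only [hw_def, inner_sub_right, real_inner_smul_right, hee, heA, ← hc2_def]
    ring
  have hCA : ⟪C,A⟫ = c1 := real_inner_comm A C
  have hCe : ⟪C,e2⟫ = c2 := real_inner_comm e2 C
  have hww : ⟪w,w⟫ = 1 - c1^2 - c2^2 := by
    simp only [hw_def, inner_sub_left, inner_sub_right, real_inner_smul_left,
      real_inner_smul_right, hCC, hAA, hee, hAe, heA, hCA, hCe, ← hc1_def, ← hc2_def]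
    ring
  -- numeric bounds to show w ≠ 0
  have hc1l : -0.344 ≤ c1 := by have := (abs_le.mp hAC').1; linarith
  have hc1u : c1 ≤ -0.323 := by have := (abs_le.mp hAC').2; linarith
  have hBCcoord : |p*c1 + q*c2 + 1/3| ≤ η := by rw [← hBX C]; exact hBC'
  obtain ⟨hc2l, hc2u⟩ := Hcoord p q η c1 c2 hη0 hη hpAB hpl hpu hql hqu hAC' hBCcoord
  have hwwpos : 0 < ⟪w,w⟫ := by rw [hww]; exact Hwpos' c1 c2 hc1l hc1u hc2l hc2u
  have hw0 : w ≠ 0 := by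
    intro h; rw [h, inner_zero_left] at hwwpos; linarith
  have hnw0 : ‖w‖ ≠ 0 := by simpa using hw0
  have hnwpos : 0 < ‖w‖ := norm_pos_iff.mpr hw0
  set n : EuclideanSpace ℝ (Fin 3) := ‖w‖⁻¹ • w with hn_def
  have hAn : ⟪A,n⟫ = 0 := by rw [hn_def, real_inner_smul_right, hwA, mul_zero]
  have hen : ⟪e2,n⟫ = 0 := by rw [hn_def, real_inner_smul_right, hwe, mul_zero]
  have hww' : ⟪w,w⟫ = ‖w‖^2 := real_inner_self_eq_norm_sq w
  have hnn : ⟪n,n⟫ = 1 := by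
    rw [hn_def, real_inner_smul_left, real_inner_smul_right, hww']
    field_simp
    try ring
  have hnw : ⟪n,w⟫ = ‖w‖ := by
    rw [hn_def, real_inner_smul_left, hww', pow_two, ← mul_assoc, inv_mul_cancel₀ hnw0, one_mul]
  -- decomposition of any vector in the frame
  have decomp : ∀ X : EuclideanSpace ℝ (Fin 3),
      X = ⟪A,X⟫ • A + ⟪e2,X⟫ • e2 + ⟪n,X⟫ • n := by
    intro X
    set v : EuclideanSpace ℝ (Fin 3) := X - ⟪A,X⟫ • A - ⟪e2,X⟫ • e2 with hv_def
    have hvA : ⟪A,v⟫ = 0 := by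
      simp only [hv_def, inner_sub_right, real_inner_smul_right, hAA, hAe]
      ring
    have hve : ⟪e2,v⟫ = 0 := by
      simp only [hv_def, inner_sub_right, real_inner_smul_right, hee, heA]
      ring
    obtain ⟨c, hc⟩ := aux_parallel A e2 w v hAA hee hAe hwA hwe hw0 hvA hve
    have hnv : ⟪n,v⟫ = c * ‖w‖ := by rw [hc, real_inner_smul_right, hnw]
    have hnA' : ⟪n,A⟫ = 0 := by rw [real_inner_comm]; exact hAn
    have hne' : ⟪n,e2⟫ = 0 := by rw [real_inner_comm]; exact hen
    have hXv : X = v + ⟪A,X⟫ • A + ⟪e2,X⟫ • e2 := by rw [hv_def]; abel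
    have hnX : ⟪n,X⟫ = c * ‖w‖ := by
      conv_lhs => rw [hXv]
      rw [inner_add_right, inner_add_right, real_inner_smul_right, real_inner_smul_right,
        hnv, hnA', hne']
      ring
    have hvn : v = ⟪n,X⟫ • n := by
      rw [hnX, hc, hn_def, smul_smul, mul_assoc, mul_inv_cancel₀ hnw0, mul_one]
    conv_lhs => rw [hXv, hvn]
    abel
  -- coordinates
  set d1 : ℝ := ⟪A,D⟫ with hd1_def
  set d2 : ℝ := ⟪e2,D⟫ with hd2_def
  set f1 : ℝ := ⟪A,F⟫ with hf1_def
  set f2 : ℝ := ⟪e2,F⟫ with hf2_def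
  set g1 : ℝ := ⟪A,G⟫ with hg1_def
  set g2 : ℝ := ⟪e2,G⟫ with hg2_def
  set c3 : ℝ := ⟪n,C⟫ with hc3_def
  set d3 : ℝ := ⟪n,D⟫ with hd3_def
  set f3 : ℝ := ⟪n,F⟫ with hf3_def
  set g3 : ℝ := ⟪n,G⟫ with hg3_def
  have hCdec := decomp C
  have hDdec := decomp D
  have hFdec := decomp F
  have hGdec := decomp G
  have ex := expand3 hAA hee hnn hAe hAn hen
  -- unit norm equations
  have hCu : c1^2 + c2^2 + c3^2 = 1 := by
    have := ex c1 c2 c3 c1 c2 c3 C C hCdec hCdec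
    rw [hCC] at this; linarith
  have hDu : d1^2 + d2^2 + d3^2 = 1 := by
    have := ex d1 d2 d3 d1 d2 d3 D D hDdec hDdec
    rw [hDD] at this; linarith
  have hFu : f1^2 + f2^2 + f3^2 = 1 := by
    have := ex f1 f2 f3 f1 f2 f3 F F hFdec hFdec
    rw [hFF] at this; linarith
  have hGu : g1^2 + g2^2 + g3^2 = 1 := by
    have := ex g1 g2 g3 g1 g2 g3 G G hGdec hGdec
    rw [hGG] at this; linarith
  -- B-coordinate bounds
  have hBDcoord : |p*d1 + q*d2 + 1/3| ≤ η := by rw [← hBX D]; exact hBD'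
  have hBFcoord : |p*f1 + q*f2 + 1/3| ≤ η := by rw [← hBX F]; exact hBF'
  have hBGcoord : |p*g1 + q*g2 + 1/3| ≤ η := by rw [← hBX G]; exact hBG'
  -- interval bounds for all coordinates
  have hd1l : -0.344 ≤ d1 := by have := (abs_le.mp hAD').1; linarith
  have hd1u : d1 ≤ -0.323 := by have := (abs_le.mp hAD').2; linarith
  have hf1l : -0.344 ≤ f1 := by have := (abs_le.mp hAF').1; linarith
  have hf1u : f1 ≤ -0.323 := by have := (abs_le.mp hAF').2; linarith
  have hg1l : -0.344 ≤ g1 := by have := (abs_le.mp hAG').1; linarith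
  have hg1u : g1 ≤ -0.323 := by have := (abs_le.mp hAG').2; linarith
  obtain ⟨hd2l, hd2u⟩ := Hcoord p q η d1 d2 hη0 hη hpAB hpl hpu hql hqu hAD' hBDcoord
  obtain ⟨hf2l, hf2u⟩ := Hcoord p q η f1 f2 hη0 hη hpAB hpl hpu hql hqu hAF' hBFcoord
  obtain ⟨hg2l, hg2u⟩ := Hcoord p q η g1 g2 hη0 hη hpAB hpl hpu hql hqu hAG' hBGcoord
  -- c3 is nonnegative
  have hc3eq : c3 = ‖w‖ := by
    have hnA' : ⟪n,A⟫ = 0 := by rw [real_inner_comm]; exact hAn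
    have hne' : ⟪n,e2⟫ = 0 := by rw [real_inner_comm]; exact hen
    have hCw : C = w + c1 • A + c2 • e2 := by rw [hw_def]; abel
    rw [hc3_def]
    conv_lhs => rw [hCw]
    rw [inner_add_right, inner_add_right, real_inner_smul_right, real_inner_smul_right,
      hnw, hnA', hne']
    ring
  have hc30 : 0 ≤ c3 := by rw [hc3eq]; exact norm_nonneg w
  -- cross inner products
  have hCDx : |c1*d1 + c2*d2 + c3*d3 + 1/3| ≤ η := by
    rw [← ex c1 c2 c3 d1 d2 d3 C D hCdec hDdec]; exact hCD'
  have hFGx : |f1*g1 + f2*g2 + f3*g3 + 1/3| ≤ η := by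
    rw [← ex f1 f2 f3 g1 g2 g3 F G hFdec hGdec]; exact hFG'
  have hc3d3 : c3*d3 ≤ -0.6 :=
    Hneg c1 c2 d1 d2 (c3*d3) η hη hc1l hc1u hd1l hd1u hc2l hc2u hd2l hd2u hCDx
  have hf3g3 : f3*g3 ≤ -0.6 :=
    Hneg f1 f2 g1 g2 (f3*g3) η hη hf1l hf1u hg1l hg1u hf2l hf2u hg2l hg2u hFGx
  have hc3pos : 0 < c3 := by
    rcases lt_or_eq_of_le hc30 with h | h
    · exact h
    · exfalso; rw [← h] at hc3d3; norm_num at hc3d3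
  have hd3neg : d3 < 0 := Hsign1 c3 d3 hc3d3 hc3pos
  -- norm from coordinates
  have normXY : ∀ (x1 x2 x3 y1 y2 y3 : ℝ) (X Y : EuclideanSpace ℝ (Fin 3)),
      X = x1 • A + x2 • e2 + x3 • n → Y = y1 • A + y2 • e2 + y3 • n →
      x1^2 + x2^2 + x3^2 = 1 → y1^2 + y2^2 + y3^2 = 1 →
      ‖X - Y‖^2 = (x1-y1)^2 + (x2-y2)^2 + (x3-y3)^2 := by
    intro x1 x2 x3 y1 y2 y3 X Y hX hY hXu hYu
    have h1 : ⟪X,Y⟫ = x1*y1 + x2*y2 + x3*y3 := ex x1 x2 x3 y1 y2 y3 X Y hX hY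
    have h2 : ⟪X,X⟫ = x1*x1 + x2*x2 + x3*x3 := ex x1 x2 x3 x1 x2 x3 X X hX hX
    have h3 : ⟪Y,Y⟫ = y1*y1 + y2*y2 + y3*y3 := ex y1 y2 y3 y1 y2 y3 Y Y hY hY
    have h4 : ‖X‖^2 = x1*x1 + x2*x2 + x3*x3 := by rw [← real_inner_self_eq_norm_sq, h2]
    have h5 : ‖Y‖^2 = y1*y1 + y2*y2 + y3*y3 := by rw [← real_inner_self_eq_norm_sq, h3]
    rw [norm_sub_sq_real, h1, h4, h5]
    ring
  have hfinal : ∀ (x1 x2 x3 y1 y2 y3 : ℝ) (X Y : EuclideanSpace ℝ (Fin 3)),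
      X = x1 • A + x2 • e2 + x3 • n → Y = y1 • A + y2 • e2 + y3 • n →
      x1^2 + x2^2 + x3^2 = 1 → y1^2 + y2^2 + y3^2 = 1 →
      |x1 + 1/3| ≤ η → |y1 + 1/3| ≤ η →
      |p*x1 + q*x2 + 1/3| ≤ η → |p*y1 + q*y2 + 1/3| ≤ η →
      0 ≤ x3*y3 → ‖X - Y‖ ≤ 400 * (δ + ε) := by
    intro x1 x2 x3 y1 y2 y3 X Y hX hY hXu hYu ha hb hc hd hsgn
    have hsq := pair_close p q η x1 x2 x3 y1 y2 y3 hη0 hη hpAB hq2 (le_of_lt hq0)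
      ha hb hc hd hXu hYu hsgn
    have hn2 := normXY x1 x2 x3 y1 y2 y3 X Y hX hY hXu hYu
    have h6 : ‖X - Y‖ ≤ 6*η := by
      refine Hnorm _ _ (norm_nonneg _) (by linarith) ?_
      rw [hn2]; exact hsq
    have : 6*η ≤ 400*(δ + ε) := by rw [hη_def]; linarith
    linarith
  rcases le_or_gt 0 f3 with hf3 | hf3
  · -- f3 ≥ 0 : C ↔ F, D ↔ G
    left
    have hf3pos : 0 < f3 := by
      rcases lt_or_eq_of_le hf3 with h | h
      · exact h
      · exfalso; rw [← h] at hf3g3; norm_num at hf3g3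
    have hg3neg : g3 < 0 := Hsign1 f3 g3 hf3g3 hf3pos
    constructor
    · exact hfinal c1 c2 c3 f1 f2 f3 C F hCdec hFdec hCu hFu hAC' hAF' hBCcoord hBFcoord
        (mul_nonneg hc30 hf3)
    · exact hfinal d1 d2 d3 g1 g2 g3 D G hDdec hGdec hDu hGu hAD' hAG' hBDcoord hBGcoord
        (Hmulnn d3 g3 (le_of_lt hd3neg) (le_of_lt hg3neg))
  · -- f3 < 0 : C ↔ G, D ↔ F
    right
    have hg3pos : 0 < g3 := Hsign2 g3 f3 (by linarith [hf3g3, mul_comm f3 g3]) hf3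
    constructor
    · exact hfinal c1 c2 c3 g1 g2 g3 C G hCdec hGdec hCu hGu hAC' hAG' hBCcoord hBGcoord
        (mul_nonneg hc30 (le_of_lt hg3pos))
    · exact hfinal d1 d2 d3 f1 f2 f3 D F hDdec hFdec hDu hFu hAD' hAF' hBDcoord hBFcoord
        (Hmulnn d3 f3 (le_of_lt hd3neg) (le_of_lt hf3))
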